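/- Let ρ > 1, σ̃² > 0 and f ≥ 0. Let μ be the measure on ℝ given by Lebesgue measure with density p, where p(x) = 1/(2·ln(ρ)·x) for x ∈ [σ̃²/ρ, ρ·σ̃²] and p(x) = 0 otherwise, and for τ ∈ ℝ define ε(τ) = μ{x : x ≥ τ} + μ{x : x ≤ τ − f}. Then τ* = min(f + σ̃²/ρ, ρ·σ̃²) minimizes ε, i.e., ε(τ*) ≤ ε(τ) for every real τ. -/

import Mathlib

open MeasureTheory ENNReal

/-- The optimal detection threshold claim: under the bounded noise-uncertainty model,
the threshold `τ* = min(f + σ̃²/ρ, ρ σ̃²)` minimizes the total detection error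
probability (false alarm plus miss detection). -/
theorem optimal_detection_threshold (ρ σ2 f : ℝ) (hρ : 1 < ρ) (hσ : 0 < σ2)
    (hf : 0 ≤ f) :
    let μ : Measure ℝ := MeasureTheory.volume.withDensity (fun x =>
      if x ∈ Set.Icc (σ2 / ρ) (ρ * σ2) then ENNReal.ofReal (1 / (2 * Real.log ρ * x))
      else 0)
    let ε : ℝ → ℝ≥0∞ := fun τ => μ {x | τ ≤ x} + μ {x | x ≤ τ - f}
    ∀ τ : ℝ, ε (min (f + σ2 / ρ) (ρ * σ2)) ≤ ε τ := by
  intro μ ε τ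
  set a := σ2 / ρ with ha
  set b := ρ * σ2 with hb
  have hρ0 : (0:ℝ) < ρ := lt_trans one_pos hρ
  have ha0 : 0 < a := div_pos hσ hρ0
  have hL : 0 < Real.log ρ := Real.log_pos hρ
  set g : ℝ → ℝ≥0∞ := fun x =>
    if x ∈ Set.Icc a b then ENNReal.ofReal (1 / (2 * Real.log ρ * x)) else 0 with hgdef
  have hgm : Measurable g := by
    apply Measurable.ite measurableSet_Icc
    · exact ENNReal.measurable_ofReal.comp
        (measurable_const.div ((measurable_const.mul measurable_id)))
    · exact measurable_const
  have hμdef : μ = MeasureTheory.volume.withDensity g := rfl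
  have hnull : ∀ s : Set ℝ, MeasureTheory.volume s = 0 → μ s = 0 := fun s hs =>
    (withDensity_absolutelyContinuous MeasureTheory.volume g) hs
  have happ : ∀ s : Set ℝ, MeasurableSet s → μ s = ∫⁻ x in s, g x := by
    intro s hs
    rw [hμdef, withDensity_apply _ hs]
  -- measure of sets left of a is zero
  have hIio : μ (Set.Iio a) = 0 := by
    rw [happ _ measurableSet_Iio]
    rw [setLIntegral_congr_fun measurableSet_Iio
      (fun ⦃x⦄ (hx : x < a) => if_neg (by
        simp only [Set.mem_Icc, not_and_or]
        exact Or.inl (not_le.mpr hx)))]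
    simp
  have hIica : μ (Set.Iic a) = 0 := by
    have h1 : Set.Iic a ⊆ Set.Iio a ∪ {a} := by
      intro x hx
      rcases lt_or_eq_of_le (Set.mem_Iic.mp hx) with h | h
      · exact Or.inl h
      · exact Or.inr h
    refine le_antisymm (le_trans (measure_mono h1) ?_) (zero_le)
    refine le_trans (measure_union_le _ _) ?_
    rw [hIio, hnull {a} (by simp)]
    simp
  -- measure of sets right of b is zero
  have hIoi : μ (Set.Ioi b) = 0 := by
    rw [happ _ measurableSet_Ioi]
    rw [setLIntegral_congr_fun measurableSet_Ioi
      (fun ⦃x⦄ (hx : b < x) => if_neg (by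
        simp only [Set.mem_Icc, not_and_or]
        exact Or.inr (not_le.mpr hx)))]
    simp
  have hIcib : μ (Set.Ici b) = 0 := by
    have h1 : Set.Ici b ⊆ Set.Ioi b ∪ {b} := by
      intro x hx
      rcases lt_or_eq_of_le (Set.mem_Ici.mp hx) with h | h
      · exact Or.inl h
      · exact Or.inr h.symm
    refine le_antisymm (le_trans (measure_mono h1) ?_) (zero_le)
    refine le_trans (measure_union_le _ _) ?_
    rw [hIoi, hnull {b} (by simp)]
    simp
  have hεeq : ∀ t : ℝ, ε t = μ (Set.Ici t) + μ (Set.Iic (t - f)) := fun t => rfl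
  by_cases hcase : f + a ≤ b
  · -- τ* = f + a
    rw [min_eq_left hcase]
    rw [hεeq, hεeq]
    have h2 : f + a - f = a := by ring
    rw [h2, hIica, add_zero]
    rcases le_total τ (f + a) with hτ | hτ
    · calc μ (Set.Ici (f + a)) ≤ μ (Set.Ici τ) := measure_mono (Set.Ici_subset_Ici.mpr hτ)
        _ ≤ _ := le_self_add
    · -- f + a ≤ τ
      have hsplit : Set.Ici (f + a) = Set.Ico (f + a) τ ∪ Set.Ici τ :=
        (Set.Ico_union_Ici_eq_Ici hτ).symm
      have hkey : μ (Set.Ico (f + a) τ) ≤ μ (Set.Iic (τ - f)) := by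
        have himg : (fun x => x + f) '' Set.Ico a (τ - f) = Set.Ico (f + a) τ := by
          rw [Set.image_add_const_Ico]
          congr 1 <;> ring
        have hmp : MeasurePreserving (fun x : ℝ => x + f)
            MeasureTheory.volume MeasureTheory.volume :=
          measurePreserving_add_right MeasureTheory.volume f
        have hemb : MeasurableEmbedding (fun x : ℝ => x + f) :=
          (MeasurableEquiv.addRight f).measurableEmbedding
        have hchg : ∫⁻ x in Set.Ico (f + a) τ, g x
            = ∫⁻ x in Set.Ico a (τ - f), g (x + f) := by
          rw [hmp.setLIntegral_comp_emb hemb g (Set.Ico a (τ - f)), himg]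
        have hpt : ∀ x ∈ Set.Ico a (τ - f), g (x + f) ≤ g x := by
          intro x hx
          have hxa : a ≤ x := hx.1
          by_cases hxf : x + f ∈ Set.Icc a b
          · have hxmem : x ∈ Set.Icc a b :=
              ⟨hxa, le_trans (le_add_of_nonneg_right hf) hxf.2⟩
            simp only [hgdef, if_pos hxf, if_pos hxmem]
            apply ENNReal.ofReal_le_ofReal
            have hx0 : 0 < x := lt_of_lt_of_le ha0 hxa
            apply one_div_le_one_div_of_le
            · exact mul_pos (mul_pos two_pos hL) hx0
            · have : x ≤ x + f := le_add_of_nonneg_right hf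
              nlinarith
          · simp only [hgdef, if_neg hxf]
            exact zero_le
        calc μ (Set.Ico (f + a) τ) = ∫⁻ x in Set.Ico (f + a) τ, g x :=
              happ _ measurableSet_Ico
          _ = ∫⁻ x in Set.Ico a (τ - f), g (x + f) := hchg
          _ ≤ ∫⁻ x in Set.Ico a (τ - f), g x := setLIntegral_mono hgm hpt
          _ = μ (Set.Ico a (τ - f)) := (happ _ measurableSet_Ico).symm
          _ ≤ μ (Set.Iic (τ - f)) := measure_mono
              (Set.Ico_subset_Iio_self.trans Set.Iio_subset_Iic_self)
      calc μ (Set.Ici (f + a)) = μ (Set.Ico (f + a) τ ∪ Set.Ici τ) := by rw [hsplit]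
        _ ≤ μ (Set.Ico (f + a) τ) + μ (Set.Ici τ) := measure_union_le _ _
        _ ≤ μ (Set.Iic (τ - f)) + μ (Set.Ici τ) := add_le_add_left hkey _
        _ = μ (Set.Ici τ) + μ (Set.Iic (τ - f)) := add_comm _ _
  · -- τ* = b, total error is zero
    push_neg at hcase
    rw [min_eq_right hcase.le]
    rw [hεeq, hIcib]
    have hbf : b - f ≤ a := by linarith
    have : μ (Set.Iic (b - f)) = 0 := by
      refine le_antisymm (le_trans (measure_mono (Set.Iic_subset_Iic.mpr hbf)) ?_) (zero_le)
      rw [hIica]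
    rw [this, add_zero]
    exact zero_le
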